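/- arXiv:2507.23249 — 5 statements merged into one kernel-verified Lean document; each statement's English description precedes it below -/
import Mathlib

section
/- Let (F,G) be a dual frame pair for an n-dimensional Hilbert space H with N vectors each, and p > 1. Then (1/N · ∑_{i=1}^N |⟨f_i, g_i⟩|^p)^{1/p} ≥ n/N, with equality if and only if ⟨f_i, g_i⟩ = n/N for all i. -/
set_option maxHeartbeats 1000000 in
theorem stmt7 (n N : ℕ) (hN : 0 < N) (H : Type*) [NormedAddCommGroup H]
    [InnerProductSpace ℂ H] [FiniteDimensional ℂ H] (hn : Module.finrank ℂ H = n)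
    (f g : Fin N → H)
    (hdual : ∀ v : H, v = ∑ i, (inner ℂ (f i) v : ℂ) • g i)
    (p : ℝ) (hp : 1 < p) :
    ((1 / N : ℝ) * ∑ i, ‖(inner ℂ (f i) (g i) : ℂ)‖ ^ p) ^ (1 / p) ≥ (n : ℝ) / N ∧
    (((1 / N : ℝ) * ∑ i, ‖(inner ℂ (f i) (g i) : ℂ)‖ ^ p) ^ (1 / p) = (n : ℝ) / N ↔
      ∀ i, (inner ℂ (f i) (g i) : ℂ) = ((n : ℝ) / N : ℝ)) := by
  have hp0 : (0:ℝ) < p := lt_trans one_pos hp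
  have hNpos : (0:ℝ) < N := by exact_mod_cast hN
  -- trace identity : ∑ ⟪f i, g i⟫ = n
  have hsum : ∑ i, (inner ℂ (f i) (g i) : ℂ) = (n : ℂ) := by
    have e := stdOrthonormalBasis ℂ H
    calc ∑ i, (inner ℂ (f i) (g i) : ℂ)
        = ∑ i, ∑ j, (inner ℂ (f i) (e j) : ℂ) * inner ℂ (e j) (g i) := by
          refine Finset.sum_congr rfl fun i _ => ?_
          exact (e.sum_inner_mul_inner (f i) (g i)).symm
      _ = ∑ j, ∑ i, (inner ℂ (f i) (e j) : ℂ) * inner ℂ (e j) (g i) := Finset.sum_comm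
      _ = ∑ j : Fin (Module.finrank ℂ H), (1:ℂ) := by
          refine Finset.sum_congr rfl fun j _ => ?_
          have h1 : (inner ℂ (e j) (e j) : ℂ) = 1 := by
            have := e.orthonormal.1 j
            rw [@inner_self_eq_norm_sq_to_K ℂ, this]; norm_num
          calc ∑ i, (inner ℂ (f i) (e j) : ℂ) * inner ℂ (e j) (g i)
              = inner ℂ (e j) (∑ i, (inner ℂ (f i) (e j) : ℂ) • g i) := by
                rw [inner_sum]
                refine Finset.sum_congr rfl fun i _ => ?_
                rw [inner_smul_right]
            _ = 1 := by rw [← hdual (e j)]; exact h1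
      _ = (n : ℂ) := by simp [hn]
  rcases Nat.eq_zero_or_pos n with hn0 | hnpos
  · -- trivial case : n = 0
    subst hn0
    have hsub : Subsingleton H := by
      rw [← Module.finrank_zero_iff (R := ℂ)]; exact hn
    have hz : ∀ i, (inner ℂ (f i) (g i) : ℂ) = 0 := by
      intro i
      have : f i = 0 := Subsingleton.elim _ _
      rw [this, inner_zero_left]
    have hL : ((1 / N : ℝ) * ∑ i, ‖(inner ℂ (f i) (g i) : ℂ)‖ ^ p) ^ (1 / p) = 0 := by
      have : ∑ i, ‖(inner ℂ (f i) (g i) : ℂ)‖ ^ p = 0 := by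
        refine Finset.sum_eq_zero fun i _ => ?_
        rw [hz i]; simp [Real.zero_rpow hp0.ne']
      rw [this, mul_zero, Real.zero_rpow (by positivity : 1/p ≠ 0)]
    refine ⟨by rw [hL]; simp, ?_⟩
    constructor
    · intro _ i; rw [hz i]; simp
    · intro _; rw [hL]; simp
  · -- main case : n > 0
    set c : ℝ := (n : ℝ) / N with hc
    have hcpos : 0 < c := by positivity
    set a : Fin N → ℝ := fun i => ‖(inner ℂ (f i) (g i) : ℂ)‖ with ha
    have hanonneg : ∀ i, 0 ≤ a i := fun i => norm_nonneg _
    have hre : ∑ i, (inner ℂ (f i) (g i) : ℂ).re = (n : ℝ) := by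
      have := congrArg Complex.re hsum
      simpa [Complex.re_sum] using this
    have hsa : (n : ℝ) ≤ ∑ i, a i := by
      rw [← hre]
      exact Finset.sum_le_sum fun i _ => Complex.re_le_norm _
    -- tangent-line (Bernoulli) inequality at c
    have hlin : ∀ x : ℝ, c ^ p * (1 + p * (x / c - 1)) = c ^ p + p * c ^ (p - 1) * (x - c) := by
      intro x
      rw [Real.rpow_sub_one hcpos.ne']
      field_simp
    have key : ∀ x : ℝ, 0 ≤ x →
        (c ^ p + p * c ^ (p - 1) * (x - c) ≤ x ^ p ∧
          (x ≠ c → c ^ p + p * c ^ (p - 1) * (x - c) < x ^ p)) := by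
      intro x hx
      have hs : -1 ≤ x / c - 1 := by
        have : 0 ≤ x / c := div_nonneg hx hcpos.le
        linarith
      have h1s : 1 + (x / c - 1) = x / c := by ring
      have hrw : c ^ p * (x / c) ^ p = x ^ p := by
        rw [Real.div_rpow hx hcpos.le, mul_div_cancel₀]
        exact (Real.rpow_pos_of_pos hcpos p).ne'
      constructor
      · have := one_add_mul_self_le_rpow_one_add hs hp.le
        rw [h1s] at this
        have h2 := mul_le_mul_of_nonneg_left this (Real.rpow_nonneg hcpos.le p)
        rw [hrw] at h2
        calc c ^ p + p * c ^ (p - 1) * (x - c) = c ^ p * (1 + p * (x / c - 1)) := (hlin x).symm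
          _ ≤ x ^ p := h2
      · intro hxc
        have hs' : x / c - 1 ≠ 0 := by
          intro h
          apply hxc
          field_simp at h
          linarith
        have := one_add_mul_self_lt_rpow_one_add hs hs' hp
        rw [h1s] at this
        have h2 := mul_lt_mul_of_pos_left this (Real.rpow_pos_of_pos hcpos p)
        rw [hrw] at h2
        calc c ^ p + p * c ^ (p - 1) * (x - c) = c ^ p * (1 + p * (x / c - 1)) := (hlin x).symm
          _ < x ^ p := h2
    have hNc : (N : ℝ) * c = n := by rw [hc]; field_simp
    have hsumlin : ∑ i, (c ^ p + p * c ^ (p - 1) * (a i - c))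
        = N * c ^ p + p * c ^ (p - 1) * (∑ i, a i - n) := by
      rw [Finset.sum_add_distrib, Finset.sum_const, ← Finset.mul_sum, Finset.sum_sub_distrib,
        Finset.sum_const, Finset.card_univ, Fintype.card_fin, nsmul_eq_mul, nsmul_eq_mul, hNc]
    have hcp1pos : 0 < p * c ^ (p - 1) := by positivity
    have hge : (N : ℝ) * c ^ p ≤ ∑ i, a i ^ p := by
      have h1 : ∑ i, (c ^ p + p * c ^ (p - 1) * (a i - c)) ≤ ∑ i, a i ^ p :=
        Finset.sum_le_sum fun i _ => (key (a i) (hanonneg i)).1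
      rw [hsumlin] at h1
      nlinarith
    have hS : c ^ p ≤ (1 / N : ℝ) * ∑ i, a i ^ p := by
      rw [div_mul_eq_mul_div, one_mul, le_div_iff₀ hNpos]
      nlinarith
    have hcpcp : ((c ^ p : ℝ)) ^ (1 / p) = c := by
      rw [← Real.rpow_mul hcpos.le, mul_one_div, div_self hp0.ne', Real.rpow_one]
    have hmain : ((1 / N : ℝ) * ∑ i, a i ^ p) ^ (1 / p) ≥ c := by
      calc c = ((c ^ p : ℝ)) ^ (1 / p) := hcpcp.symm
        _ ≤ ((1 / N : ℝ) * ∑ i, a i ^ p) ^ (1 / p) :=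
            Real.rpow_le_rpow (Real.rpow_nonneg hcpos.le p) hS (by positivity)
    refine ⟨hmain, ?_, ?_⟩
    · -- forward direction of iff
      intro heq
      have heq' : ((1 / N : ℝ) * ∑ i, a i ^ p) ^ (1 / p) = c := heq
      have hXnn : 0 ≤ (1 / N : ℝ) * ∑ i, a i ^ p := by positivity
      have hX : (1 / N : ℝ) * ∑ i, a i ^ p = c ^ p := by
        have h : (((1 / N : ℝ) * ∑ i, a i ^ p) ^ (1 / p)) ^ p = c ^ p := by rw [heq']
        rwa [← Real.rpow_mul hXnn, one_div_mul_cancel hp0.ne', Real.rpow_one] at h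
      have hsump : ∑ i, a i ^ p = N * c ^ p := by
        field_simp at hX; linarith
      have hall : ∀ i, a i = c := by
        by_contra hcon
        push_neg at hcon
        obtain ⟨i0, hi0⟩ := hcon
        have hlt : ∑ i, (c ^ p + p * c ^ (p - 1) * (a i - c)) < ∑ i, a i ^ p :=
          Finset.sum_lt_sum (fun i _ => (key (a i) (hanonneg i)).1)
            ⟨i0, Finset.mem_univ i0, (key (a i0) (hanonneg i0)).2 hi0⟩
        rw [hsumlin, hsump] at hlt
        nlinarith
      have hsaeq : ∑ i, a i = (n : ℝ) := by
        calc ∑ i, a i = ∑ _i : Fin N, c := Finset.sum_congr rfl fun i _ => hall i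
          _ = N * c := by simp [Finset.sum_const, nsmul_eq_mul]
          _ = n := hNc
      have hreeq : ∀ i, (inner ℂ (f i) (g i) : ℂ).re = a i := by
        have hle : ∀ i ∈ Finset.univ, (inner ℂ (f i) (g i) : ℂ).re ≤ a i :=
          fun i _ => Complex.re_le_norm _
        have h2 := (Finset.sum_eq_sum_iff_of_le hle).mp (by rw [hre, hsaeq])
        exact fun i => h2 i (Finset.mem_univ i)
      intro i
      have hrc : (inner ℂ (f i) (g i) : ℂ).re = c := by rw [hreeq i, hall i]
      have him : (inner ℂ (f i) (g i) : ℂ).im = 0 := by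
        have h1 := Complex.sq_norm (inner ℂ (f i) (g i) : ℂ)
        rw [Complex.normSq_apply] at h1
        have h2 : (inner ℂ (f i) (g i) : ℂ).re = ‖(inner ℂ (f i) (g i) : ℂ)‖ := by
          rw [hreeq i]
        have h3 : (inner ℂ (f i) (g i) : ℂ).im * (inner ℂ (f i) (g i) : ℂ).im = 0 := by
          rw [h2, pow_two] at h1; linarith
        exact mul_self_eq_zero.mp h3
      apply Complex.ext
      · rw [Complex.ofReal_re]; exact hrc
      · rw [Complex.ofReal_im]; exact him
    · -- backward direction of iff
      intro hall
      have haeq : ∀ i, a i = c := by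
        intro i
        show ‖(inner ℂ (f i) (g i) : ℂ)‖ = c
        rw [hall i, Complex.norm_real, Real.norm_of_nonneg hcpos.le]
      have hsump : ∑ i, a i ^ p = N * c ^ p := by
        calc ∑ i, a i ^ p = ∑ _i : Fin N, c ^ p :=
              Finset.sum_congr rfl fun i _ => by rw [haeq i]
          _ = N * c ^ p := by simp [Finset.sum_const, nsmul_eq_mul]
      have hX : (1 / N : ℝ) * ∑ i, a i ^ p = c ^ p := by
        rw [hsump]; field_simp
      show ((1 / N : ℝ) * ∑ i, a i ^ p) ^ (1 / p) = c
      rw [hX, hcpcp]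
end

section
/- For any n-dimensional Hilbert space H and any N ≥ n, there exists a Parseval frame F = {f_i}_{i=1}^N for H with ‖f_i‖² = n/N for all i; consequently E_1^p(F,F) = (1/N ∑_i |⟨f_i,f_i⟩|^p)^{1/p} = n/N. -/
open Complex Finset

private lemma aux_exp_sum (N : ℕ) (hN : 0 < N) (k l : ℕ) (hk : k < N) (hl : l < N) :
    ∑ i : Fin N, Complex.exp (2 * (Real.pi : ℂ) * Complex.I * i * k / N) *
      (starRingEnd ℂ) (Complex.exp (2 * (Real.pi : ℂ) * Complex.I * i * l / N)) =
      if k = l then (N : ℂ) else 0 := by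
  have hNC : (N : ℂ) ≠ 0 := Nat.cast_ne_zero.mpr hN.ne'
  set z : ℂ := Complex.exp (2 * (Real.pi : ℂ) * Complex.I * ((k : ℂ) - l) / N) with hz
  have hterm : ∀ i : Fin N,
      Complex.exp (2 * (Real.pi : ℂ) * Complex.I * i * k / N) *
      (starRingEnd ℂ) (Complex.exp (2 * (Real.pi : ℂ) * Complex.I * i * l / N)) = z ^ (i : ℕ) := by
    intro i
    rw [← Complex.exp_conj, hz, ← Complex.exp_nat_mul, ← Complex.exp_add]
    congr 1
    simp only [map_div₀, map_mul, Complex.conj_I, Complex.conj_ofReal, map_ofNat, map_natCast]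
    field_simp
    ring
  simp only [hterm]
  rw [Fin.sum_univ_eq_sum_range (fun i => z ^ i) N]
  rcases eq_or_ne k l with h | h
  · simp [h, hz, if_pos]
  · rw [if_neg h]
    have hz1 : z ≠ 1 := by
      intro hzz
      rw [hz, Complex.exp_eq_one_iff] at hzz
      obtain ⟨j, hj⟩ := hzz
      have h2pi : (2 : ℂ) * (Real.pi : ℂ) * Complex.I ≠ 0 := by
        simp [Real.pi_ne_zero, Complex.I_ne_zero]
      have hj' : ((k : ℂ) - l) = j * N := by
        field_simp at hj
        apply mul_left_cancel₀ h2pi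
        rw [hj]; ring
      have hjz : (k : ℤ) - l = j * N := by exact_mod_cast hj'
      rcases eq_or_ne j 0 with hj0 | hj0
      · rw [hj0] at hjz; simp at hjz; omega
      · have h1 : (1 : ℤ) ≤ |j| := Int.one_le_abs hj0
        have habs : |(k : ℤ) - l| = |j| * N := by
          rw [hjz, abs_mul]; simp
        have h2 : |(k : ℤ) - l| < N := by
          rw [abs_sub_lt_iff]; omega
        nlinarith [h1, habs, h2]
    have hzN : z ^ N = 1 := by
      rw [hz, ← Complex.exp_nat_mul]
      have : (N : ℂ) * (2 * (Real.pi : ℂ) * Complex.I * ((k : ℂ) - l) / N) =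
          ((k : ℤ) - l : ℤ) * (2 * (Real.pi : ℂ) * Complex.I) := by
        push_cast
        field_simp
      rw [this, Complex.exp_int_mul_two_pi_mul_I]
    rw [geom_sum_eq hz1, hzN]
    simp

open scoped InnerProductSpace in
theorem stmt9 (n N : ℕ) (hN : 0 < N) (hnN : n ≤ N) (H : Type*) [NormedAddCommGroup H]
    [InnerProductSpace ℂ H] [FiniteDimensional ℂ H] (hn : Module.finrank ℂ H = n)
    (p : ℝ) (hp : 1 < p) :
    ∃ f : Fin N → H,
      (∀ v : H, ∑ i, ‖(inner ℂ (f i) v : ℂ)‖ ^ 2 = ‖v‖ ^ 2) ∧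
      (∀ i, ‖f i‖ ^ 2 = (n : ℝ) / N) ∧
      ((1 / N : ℝ) * ∑ i, ‖(inner ℂ (f i) (f i) : ℂ)‖ ^ p) ^ (1 / p) = (n : ℝ) / N := by
  have hNR : (N : ℝ) ≠ 0 := Nat.cast_ne_zero.mpr hN.ne'
  have hNC : (N : ℂ) ≠ 0 := Nat.cast_ne_zero.mpr hN.ne'
  set b : OrthonormalBasis (Fin n) ℂ H := (stdOrthonormalBasis ℂ H).reindex (finCongr hn) with hb
  set s : ℂ := ((Real.sqrt N : ℝ) : ℂ)⁻¹ with hs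
  set ω : Fin N → Fin n → ℂ :=
    fun i k => Complex.exp (2 * (Real.pi : ℂ) * Complex.I * (i : ℕ) * (k : ℕ) / N) with hω
  set f : Fin N → H := fun i => s • ∑ k, (starRingEnd ℂ) (ω i k) • b k with hf
  have hconjs : (starRingEnd ℂ) s = s := by simp [hs]
  have hss : s * s = (N : ℂ)⁻¹ := by
    rw [hs, ← mul_inv]
    congr 1
    rw [← Complex.ofReal_mul, Real.mul_self_sqrt (Nat.cast_nonneg N)]
    norm_cast
  have hbb : ∀ k l : Fin n, ⟪b k, b l⟫_ℂ = if k = l then 1 else 0 :=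
    fun k l => orthonormal_iff_ite.mp b.orthonormal k l
  have homega : ∀ (i : Fin N) (k : Fin n), ω i k * (starRingEnd ℂ) (ω i k) = 1 := by
    intro i k
    rw [hω]
    simp only
    rw [← Complex.exp_conj, ← Complex.exp_add]
    rw [show (starRingEnd ℂ) (2 * (Real.pi : ℂ) * Complex.I * ((i : Fin N) : ℕ) * ((k : Fin n) : ℕ) / N)
        = -(2 * (Real.pi : ℂ) * Complex.I * ((i : Fin N) : ℕ) * ((k : Fin n) : ℕ) / N) by
      simp only [map_div₀, map_mul, Complex.conj_I, Complex.conj_ofReal, map_ofNat, map_natCast]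
      ring]
    simp
  have hinner : ∀ (i : Fin N) (v : H), ⟪f i, v⟫_ℂ = s * ∑ k, ω i k * ⟪b k, v⟫_ℂ := by
    intro i v
    rw [hf]
    simp only [inner_smul_left, sum_inner, hconjs, Complex.conj_conj, Finset.mul_sum]
  have hfb : ∀ (i : Fin N) (k : Fin n), ⟪b k, f i⟫_ℂ = s * (starRingEnd ℂ) (ω i k) := by
    intro i k
    rw [← inner_conj_symm, hinner]
    simp [hbb, hconjs, mul_ite, Finset.sum_ite_eq]
  have hff : ∀ i, ⟪f i, f i⟫_ℂ = ((n / N : ℝ) : ℂ) := by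
    intro i
    rw [hinner i (f i)]
    have h1 : (∑ k : Fin n, ω i k * ⟪b k, f i⟫_ℂ) = (n : ℂ) * s := by
      rw [Finset.sum_congr rfl (fun k _ => by
        rw [hfb, mul_left_comm, homega i k, mul_one])]
      rw [Finset.sum_const, Finset.card_univ, Fintype.card_fin, nsmul_eq_mul]
    rw [h1, show s * ((n : ℂ) * s) = (n : ℂ) * (s * s) by ring, hss]
    rw [Complex.ofReal_div]
    push_cast
    ring
  have key : ∀ v : H, ∑ i : Fin N, ⟪f i, v⟫_ℂ * (starRingEnd ℂ) ⟪f i, v⟫_ℂ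
      = ((‖v‖ ^ 2 : ℝ) : ℂ) := by
    intro v
    set c : Fin n → ℂ := fun k => ⟪b k, v⟫_ℂ with hc
    have hstep : ∀ i : Fin N, ⟪f i, v⟫_ℂ * (starRingEnd ℂ) ⟪f i, v⟫_ℂ
        = ∑ k, ∑ l, (s * s) *
          ((c k * (starRingEnd ℂ) (c l)) * (ω i k * (starRingEnd ℂ) (ω i l))) := by
      intro i
      rw [hinner, map_mul, hconjs, map_sum]
      simp only [map_mul]
      rw [mul_mul_mul_comm, Finset.sum_mul_sum, Finset.mul_sum]
      refine Finset.sum_congr rfl fun k _ => ?_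
      rw [Finset.mul_sum]
      refine Finset.sum_congr rfl fun l _ => ?_
      ring
    rw [Finset.sum_congr rfl fun i _ => hstep i, Finset.sum_comm]
    rw [Finset.sum_congr rfl fun k _ => Finset.sum_comm]
    have h2 : ∀ k l : Fin n, ∑ i : Fin N,
        (s * s) * ((c k * (starRingEnd ℂ) (c l)) * (ω i k * (starRingEnd ℂ) (ω i l)))
        = (s * s) * ((c k * (starRingEnd ℂ) (c l)) *
            (if (k : ℕ) = (l : ℕ) then (N : ℂ) else 0)) := by
      intro k l
      rw [← Finset.mul_sum, ← Finset.mul_sum]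
      congr 1
      congr 1
      exact aux_exp_sum N hN k l (lt_of_lt_of_le k.isLt hnN) (lt_of_lt_of_le l.isLt hnN)
    rw [Finset.sum_congr rfl fun k _ => Finset.sum_congr rfl fun l _ => h2 k l]
    have h3 : ∀ k : Fin n, ∑ l : Fin n,
        (s * s) * ((c k * (starRingEnd ℂ) (c l)) *
          (if (k : ℕ) = (l : ℕ) then (N : ℂ) else 0)) = c k * (starRingEnd ℂ) (c k) := by
      intro k
      simp only [Fin.val_eq_val, mul_ite, mul_zero, ite_mul, zero_mul]
      rw [Finset.sum_ite_eq univ k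
        (fun l => (s * s) * (c k * (starRingEnd ℂ) (c l) * N))]
      simp only [Finset.mem_univ, if_pos]
      rw [hss]
      field_simp
    rw [Finset.sum_congr rfl fun k _ => h3 k]
    calc ∑ k : Fin n, c k * (starRingEnd ℂ) (c k)
        = ∑ k : Fin n, ⟪v, b k⟫_ℂ * ⟪b k, v⟫_ℂ := by
          refine Finset.sum_congr rfl fun k _ => ?_
          rw [hc]
          simp only
          rw [inner_conj_symm]
          ring
      _ = ⟪v, v⟫_ℂ := b.sum_inner_mul_inner v v
      _ = ((‖v‖ ^ 2 : ℝ) : ℂ) := by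
          rw [inner_self_eq_norm_sq_to_K]; norm_cast
  refine ⟨f, ?_, ?_, ?_⟩
  · intro v
    calc ∑ i, ‖(⟪f i, v⟫_ℂ)‖ ^ 2
        = ∑ i, (⟪f i, v⟫_ℂ * (starRingEnd ℂ) ⟪f i, v⟫_ℂ).re := by
          refine Finset.sum_congr rfl fun i _ => ?_
          rw [Complex.sq_norm, Complex.mul_conj]
          simp
      _ = (∑ i, ⟪f i, v⟫_ℂ * (starRingEnd ℂ) ⟪f i, v⟫_ℂ).re := by
          rw [Complex.re_sum]
      _ = ‖v‖ ^ 2 := by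
          rw [key v]
          norm_cast
  · intro i
    have h := hff i
    rw [inner_self_eq_norm_sq_to_K] at h
    have h' : ((‖f i‖ ^ 2 : ℝ) : ℂ) = ((n / N : ℝ) : ℂ) := by push_cast at h ⊢; exact h
    exact_mod_cast h'
  · have habs : ∀ i : Fin N, ‖(⟪f i, f i⟫_ℂ)‖ = (n : ℝ) / N := by
      intro i
      rw [hff, Complex.norm_real, Real.norm_eq_abs]
      exact abs_of_nonneg (by positivity)
    have hp0 : p ≠ 0 := by linarith
    simp only [habs]
    rw [Finset.sum_const, Finset.card_univ, Fintype.card_fin, nsmul_eq_mul]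
    rw [show (1 / N : ℝ) * ((N : ℝ) * ((n : ℝ) / N) ^ p) = ((n : ℝ) / N) ^ p by
      field_simp]
    rw [← Real.rpow_mul (by positivity), mul_one_div_cancel hp0, Real.rpow_one]
end

section
/- For any (N,n) dual pair (F,G) in an n-dimensional Hilbert space and p > 1, the 1-erasure operator-norm error measure O_1^p(F,G) = (1/N ∑_{i=1}^N (‖f_i‖·‖g_i‖)^p)^{1/p} satisfies O_1^p(F,G) ≥ n/N. -/
theorem stmt12 (n N : ℕ) (hN : 0 < N) (H : Type*) [NormedAddCommGroup H]
    [InnerProductSpace ℂ H] [FiniteDimensional ℂ H] (hn : Module.finrank ℂ H = n)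
    (f g : Fin N → H)
    (hdual : ∀ v : H, v = ∑ i, (inner ℂ (f i) v : ℂ) • g i)
    (p : ℝ) (hp : 1 < p) :
    ((1 / N : ℝ) * ∑ i, (‖f i‖ * ‖g i‖) ^ p) ^ (1 / p) ≥ (n : ℝ) / N := by
  -- Step 1: trace argument gives ∑ inner (f i) (g i) = n
  set T : H →ₗ[ℂ] H := ∑ i, dualTensorHom ℂ H H
      (((innerSL ℂ (f i)).toLinearMap : Module.Dual ℂ H) ⊗ₜ g i) with hT
  have hTid : T = LinearMap.id := by
    ext v
    simp only [hT, LinearMap.sum_apply, dualTensorHom_apply, LinearMap.id_apply]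
    exact (hdual v).symm
  have htrace : (∑ i, (inner ℂ (f i) (g i) : ℂ)) = (n : ℂ) := by
    have h1 : LinearMap.trace ℂ H T = (n : ℂ) := by
      rw [hTid, LinearMap.trace_id, hn]
    rw [hT, map_sum] at h1
    simpa [LinearMap.trace_eq_contract_apply, contractLeft_apply] using h1
  -- Step 2: n ≤ ∑ ‖f i‖ * ‖g i‖
  have hsum : (n : ℝ) ≤ ∑ i, ‖f i‖ * ‖g i‖ := by
    have : (n : ℝ) = (∑ i, (inner ℂ (f i) (g i) : ℂ)).re := by
      rw [htrace]; simp
    rw [this, Complex.re_sum]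
    apply Finset.sum_le_sum
    intro i _
    calc (inner ℂ (f i) (g i) : ℂ).re ≤ ‖(inner ℂ (f i) (g i) : ℂ)‖ := Complex.re_le_norm _
      _ ≤ ‖f i‖ * ‖g i‖ := norm_inner_le_norm _ _
  have hNpos : (0 : ℝ) < N := by exact_mod_cast hN
  -- Step 3: power mean inequality
  have hz : ∀ i ∈ Finset.univ, (0 : ℝ) ≤ ‖f i‖ * ‖g i‖ := fun i _ =>
    mul_nonneg (norm_nonneg _) (norm_nonneg _)
  have hw : ∑ _i : Fin N, (1 / N : ℝ) = 1 := by
    simp [Finset.sum_const]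
    field_simp
  have hpm := Real.rpow_arith_mean_le_arith_mean_rpow Finset.univ (fun _ => (1 / N : ℝ))
      (fun i => ‖f i‖ * ‖g i‖) (fun i _ => by positivity) hw hz hp.le
  have hmean : ((1 / N : ℝ) * ∑ i, ‖f i‖ * ‖g i‖) ^ p ≤ (1 / N : ℝ) * ∑ i, (‖f i‖ * ‖g i‖) ^ p := by
    rw [Finset.mul_sum, Finset.mul_sum]
    simpa using hpm
  have hmean_nonneg : (0 : ℝ) ≤ (1 / N : ℝ) * ∑ i, ‖f i‖ * ‖g i‖ := by
    apply mul_nonneg (by positivity)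
    exact Finset.sum_nonneg hz
  have hppos : 0 < p := lt_trans one_pos hp
  calc (n : ℝ) / N ≤ (1 / N : ℝ) * ∑ i, ‖f i‖ * ‖g i‖ := by
        rw [div_eq_mul_one_div, mul_comm]
        exact mul_le_mul_of_nonneg_left hsum (by positivity)
    _ = (((1 / N : ℝ) * ∑ i, ‖f i‖ * ‖g i‖) ^ p) ^ (1 / p) := by
        rw [← Real.rpow_mul hmean_nonneg, mul_one_div_cancel hppos.ne', Real.rpow_one]
    _ ≤ ((1 / N : ℝ) * ∑ i, (‖f i‖ * ‖g i‖) ^ p) ^ (1 / p) :=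
        Real.rpow_le_rpow (Real.rpow_nonneg hmean_nonneg p) hmean (by positivity)
end

section
/- Let (F,G) be an (N,n) dual pair with (1/N ∑_{i=1}^N (‖f_i‖·‖g_i‖)^p)^{1/p} = n/N for some p > 1. Then ⟨f_i, g_i⟩ = n/N for all i (so (F,G) is 1-uniform), and moreover ‖f_i‖·‖g_i‖ = n/N for all i. -/
theorem stmt13 (n N : ℕ) (hN : 0 < N) (H : Type*) [NormedAddCommGroup H]
    [InnerProductSpace ℂ H] [FiniteDimensional ℂ H] (hn : Module.finrank ℂ H = n)
    (f g : Fin N → H)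
    (hdual : ∀ v : H, v = ∑ i, (inner ℂ (f i) v : ℂ) • g i)
    (p : ℝ) (hp : 1 < p)
    (hopt : ((1 / N : ℝ) * ∑ i, (‖f i‖ * ‖g i‖) ^ p) ^ (1 / p) = (n : ℝ) / N) :
    ∀ i, (inner ℂ (f i) (g i) : ℂ) = ((n : ℝ) / N : ℝ) ∧ ‖f i‖ * ‖g i‖ = (n : ℝ) / N := by
  classical
  have hNpos : (0:ℝ) < N := Nat.cast_pos.mpr hN
  have hp0 : (0:ℝ) < p := lt_trans one_pos hp
  set c : ℝ := (n : ℝ) / N with hc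
  -- trace identity
  have htr : ∑ i, (inner ℂ (f i) (g i) : ℂ) = (n : ℂ) := by
    set b := stdOrthonormalBasis ℂ H with hbdef
    have hb := (stdOrthonormalBasis ℂ H).orthonormal
    rw [orthonormal_iff_ite] at hb
    calc ∑ i, (inner ℂ (f i) (g i) : ℂ)
        = ∑ i, ∑ j, (inner ℂ (f i) (b j) : ℂ) * inner ℂ (b j) (g i) := by
          refine Finset.sum_congr rfl fun i _ => ?_
          exact (b.sum_inner_mul_inner (f i) (g i)).symm
      _ = ∑ j, ∑ i, (inner ℂ (f i) (b j) : ℂ) * inner ℂ (b j) (g i) := Finset.sum_comm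
      _ = ∑ j, (inner ℂ (b j) (b j) : ℂ) := by
          refine Finset.sum_congr rfl fun j _ => ?_
          have h1 : (inner ℂ (b j) (b j) : ℂ)
              = inner ℂ (b j) (∑ i, (inner ℂ (f i) (b j) : ℂ) • g i) := by
            rw [← hdual (b j)]
          rw [h1, inner_sum]
          simp_rw [inner_smul_right]
      _ = (n : ℂ) := by
          have : ∀ j, (inner ℂ (b j) (b j) : ℂ) = 1 := fun j => by
            simpa using hb j j
          simp [this, hn]
  have hre : ∑ i, (inner ℂ (f i) (g i) : ℂ).re = (n : ℝ) := by
    have := congrArg Complex.re htr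
    simpa using this
  have hre_le : ∀ i, (inner ℂ (f i) (g i) : ℂ).re ≤ ‖f i‖ * ‖g i‖ := fun i =>
    (Complex.re_le_norm _).trans
      (by exact norm_inner_le_norm _ _)
  rcases Nat.eq_zero_or_pos n with hn0 | hnpos
  · -- trivial case n = 0
    subst hn0
    have hsing : Subsingleton H := Module.finrank_zero_iff.mp hn
    intro i
    have hf : f i = 0 := Subsingleton.elim _ _
    have hg : g i = 0 := Subsingleton.elim _ _
    simp [hf, hg, hc]
  · have hnposR : (0:ℝ) < n := Nat.cast_pos.mpr hnpos
    have hcpos : 0 < c := div_pos hnposR hNpos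
    -- turn hopt into sum of p-th powers
    have hXnn : 0 ≤ (1 / N : ℝ) * ∑ i, (‖f i‖ * ‖g i‖) ^ p := by positivity
    have hX : (1 / N : ℝ) * ∑ i, (‖f i‖ * ‖g i‖) ^ p = c ^ p := by
      have h := congrArg (fun x : ℝ => x ^ p) hopt
      rw [← Real.rpow_mul hXnn, one_div_mul_cancel hp0.ne', Real.rpow_one] at h
      exact h
    have hsum : ∑ i, (‖f i‖ * ‖g i‖) ^ p = (N : ℝ) * c ^ p := by
      field_simp at hX
      linarith
    -- tangent line inequalities
    have tangent_le : ∀ x : ℝ, 0 ≤ x →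
        c ^ p + p * c ^ (p - 1) * (x - c) ≤ x ^ p := by
      intro x hx
      have hs : -1 ≤ x / c - 1 := by
        have : 0 ≤ x / c := div_nonneg hx hcpos.le
        linarith
      have hb := one_add_mul_self_le_rpow_one_add hs hp.le
      have h1 : 1 + (x / c - 1) = x / c := by ring
      rw [h1, Real.div_rpow hx hcpos.le] at hb
      have hcp : 0 < c ^ p := Real.rpow_pos_of_pos hcpos p
      have h2 := (mul_le_mul_iff_right₀ hcp).mpr hb
      calc c ^ p + p * c ^ (p - 1) * (x - c)
          = c ^ p * (1 + p * (x / c - 1)) := by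
            rw [Real.rpow_sub hcpos, Real.rpow_one]
            field_simp
        _ ≤ c ^ p * (x ^ p / c ^ p) := h2
        _ = x ^ p := by field_simp
    have tangent_lt : ∀ x : ℝ, 0 ≤ x → x ≠ c →
        c ^ p + p * c ^ (p - 1) * (x - c) < x ^ p := by
      intro x hx hxc
      have hs : -1 ≤ x / c - 1 := by
        have : 0 ≤ x / c := div_nonneg hx hcpos.le
        linarith
      have hs' : x / c - 1 ≠ 0 := by
        intro h
        apply hxc
        have : x / c = 1 := by linarith
        field_simp at this
        linarith
      have hb := one_add_mul_self_lt_rpow_one_add hs hs' hp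
      have h1 : 1 + (x / c - 1) = x / c := by ring
      rw [h1, Real.div_rpow hx hcpos.le] at hb
      have hcp : 0 < c ^ p := Real.rpow_pos_of_pos hcpos p
      have h2 := (mul_lt_mul_iff_right₀ hcp).mpr hb
      calc c ^ p + p * c ^ (p - 1) * (x - c)
          = c ^ p * (1 + p * (x / c - 1)) := by
            rw [Real.rpow_sub hcpos, Real.rpow_one]
            field_simp
        _ < c ^ p * (x ^ p / c ^ p) := h2
        _ = x ^ p := by field_simp
    have hNc : (N : ℝ) * c = (n : ℝ) := by
      rw [hc]; field_simp
    have hsum_a_ge : (N : ℝ) * c ≤ ∑ i, ‖f i‖ * ‖g i‖ := by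
      rw [hNc, ← hre]
      exact Finset.sum_le_sum fun i _ => hre_le i
    have h3 : ∑ i : Fin N, (c ^ p + p * c ^ (p - 1) * (‖f i‖ * ‖g i‖ - c))
        = (N : ℝ) * c ^ p + p * c ^ (p - 1) * ((∑ i, ‖f i‖ * ‖g i‖) - (N : ℝ) * c) := by
      rw [Finset.sum_add_distrib, Finset.sum_const, Finset.card_univ, Fintype.card_fin,
        nsmul_eq_mul, ← Finset.mul_sum, Finset.sum_sub_distrib, Finset.sum_const,
        Finset.card_univ, Fintype.card_fin, nsmul_eq_mul]
    have h4 : 0 ≤ p * c ^ (p - 1) * ((∑ i, ‖f i‖ * ‖g i‖) - (N : ℝ) * c) := by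
      have h5 := Real.rpow_nonneg hcpos.le (p - 1)
      exact mul_nonneg (mul_nonneg hp0.le h5) (by linarith [hsum_a_ge])
    have key : ∀ i, ‖f i‖ * ‖g i‖ = c := by
      by_contra hcon
      push_neg at hcon
      obtain ⟨i0, hi0⟩ := hcon
      have h2 : ∑ i : Fin N, (c ^ p + p * c ^ (p - 1) * (‖f i‖ * ‖g i‖ - c))
          < ∑ i, (‖f i‖ * ‖g i‖) ^ p :=
        Finset.sum_lt_sum (fun i _ => tangent_le _ (by positivity))
          ⟨i0, Finset.mem_univ _, tangent_lt _ (by positivity) hi0⟩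
      rw [hsum, h3] at h2
      linarith
    have hre_eq : ∀ i, (inner ℂ (f i) (g i) : ℂ).re = c := by
      have hz : ∑ i : Fin N, (c - (inner ℂ (f i) (g i) : ℂ).re) = 0 := by
        rw [Finset.sum_sub_distrib, hre, Finset.sum_const, Finset.card_univ,
          Fintype.card_fin, nsmul_eq_mul]
        linarith [hNc]
      have hnn : ∀ i ∈ Finset.univ, 0 ≤ c - (inner ℂ (f i) (g i) : ℂ).re := by
        intro i _
        have := hre_le i
        rw [key i] at this
        linarith
      have := (Finset.sum_eq_zero_iff_of_nonneg hnn).mp hz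
      intro i
      have := this i (Finset.mem_univ i)
      linarith
    intro i
    refine ⟨?_, key i⟩
    set z : ℂ := inner ℂ (f i) (g i) with hz
    have hnorm : ‖z‖ ≤ c := by
      rw [← key i]; exact norm_inner_le_norm _ _
    have hzz : z.re * z.re + z.im * z.im = ‖z‖ ^ 2 := by
      rw [← Complex.normSq_apply, Complex.normSq_eq_norm_sq]
    have him2 : z.im * z.im ≤ 0 := by
      have h5 : ‖z‖ ^ 2 ≤ c ^ 2 := by nlinarith [norm_nonneg z]
      nlinarith [hre_eq i]
    have him : z.im = 0 :=
      mul_self_eq_zero.mp (le_antisymm him2 (mul_self_nonneg _))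
    apply Complex.ext
    · simpa using hre_eq i
    · simpa using him
end

section
/- Let Γ be a connected graph on N vertices and F = {f_i}_{i=1}^N a frame for ℂ^{N-1} whose Gramian matrix Θ_F Θ_F* equals the Laplacian L(Γ). If c_1,...,c_N ∈ ℂ with c_1 ≠ 0 satisfy ∑_i c_i f_i = 0, then every dual frame of F has the form {S_F^{-1} f_i + (c_i/c_1)·h}_{i=1}^N for some h ∈ ℂ^{N-1}. -/
theorem stmt18 (N : ℕ) (hN : 0 < N) (G : SimpleGraph (Fin N)) [DecidableRel G.Adj]
    (hconn : G.Connected)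
    (f : Fin N → EuclideanSpace ℂ (Fin (N - 1)))
    (hGram : ∀ k l, (inner ℂ (f k) (f l) : ℂ) = ((G.lapMatrix ℝ k l : ℝ) : ℂ))
    (S : EuclideanSpace ℂ (Fin (N - 1)) ≃ₗ[ℂ] EuclideanSpace ℂ (Fin (N - 1)))
    (hS : ∀ v, S v = ∑ i, (inner ℂ (f i) v : ℂ) • f i)
    (c : Fin N → ℂ) (hc0 : c ⟨0, by omega⟩ ≠ 0) (hrel : ∑ i, c i • f i = 0)
    (g : Fin N → EuclideanSpace ℂ (Fin (N - 1)))
    (hdual : ∀ v, v = ∑ i, (inner ℂ (f i) v : ℂ) • g i) :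
    ∃ h : EuclideanSpace ℂ (Fin (N - 1)),
      ∀ i, g i = S.symm (f i) + (c i / c ⟨0, by omega⟩) • h := by
  set i0 : Fin N := ⟨0, by omega⟩ with hi0
  -- Step 1: L *ᵥ c = 0 (complex), hence c is constant.
  have hLc : ∀ k, ∑ i, ((G.lapMatrix ℝ k i : ℝ) : ℂ) * c i = 0 := by
    intro k
    have := congrArg (fun w => (inner ℂ (f k) w : ℂ)) hrel
    simp only [inner_sum, inner_smul_right, inner_zero_right] at this
    rw [← this]
    exact Finset.sum_congr rfl fun i _ => by rw [hGram k i]; ring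
  have hreal : ∀ (x : Fin N → ℝ), (∀ k, ∑ i, G.lapMatrix ℝ k i * x i = 0) →
      ∀ i, x i = x i0 := by
    intro x hx i
    have h0 : Matrix.toLin' (G.lapMatrix ℝ) x = 0 := by
      funext k
      simpa [Matrix.toLin'_apply, Matrix.mulVec, dotProduct] using hx k
    exact (G.lapMatrix_mulVec_eq_zero_iff_forall_reachable (x := x)).mp
      (by rwa [Matrix.toLin'_apply] at h0) i i0
      (hconn i i0)
  have hcconst : ∀ i, c i = c i0 := by
    intro i
    have hre : ∀ k, ∑ j, G.lapMatrix ℝ k j * (c j).re = 0 := by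
      intro k
      have := congrArg Complex.re (hLc k)
      simpa [Complex.ofReal_mul] using this
    have him : ∀ k, ∑ j, G.lapMatrix ℝ k j * (c j).im = 0 := by
      intro k
      have := congrArg Complex.im (hLc k)
      simpa [Complex.ofReal_mul] using this
    have h1 := hreal (fun j => (c j).re) hre i
    have h2 := hreal (fun j => (c j).im) him i
    exact Complex.ext h1 h2
  have hratio : ∀ i, c i / c i0 = 1 := fun i => by
    rw [hcconst i]; exact div_self hc0
  -- sum of the f i is zero
  have hsumf : ∑ i, f i = 0 := by
    have : c i0 • ∑ i, f i = 0 := by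
      rw [Finset.smul_sum, ← hrel]
      exact Finset.sum_congr rfl fun i _ => by rw [hcconst i]
    exact (smul_eq_zero.mp this).resolve_left hc0
  -- The analysis operator
  let T : EuclideanSpace ℂ (Fin (N - 1)) →ₗ[ℂ] (Fin N → ℂ) :=
    { toFun := fun v i => (inner ℂ (f i) v : ℂ)
      map_add' := fun u v => by funext i; simp [inner_add_right]
      map_smul' := fun a v => by funext i; simp [inner_smul_right] }
  let φ : (Fin N → ℂ) →ₗ[ℂ] ℂ :=
    { toFun := fun a => ∑ i, a i
      map_add' := fun a b => by simp [Finset.sum_add_distrib]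
      map_smul' := fun r a => by simp [Finset.mul_sum] }
  have hTker : LinearMap.ker T = ⊥ := by
    rw [LinearMap.ker_eq_bot']
    intro v hv
    have hSv : S v = 0 := by
      rw [hS v]
      refine Finset.sum_eq_zero fun i _ => ?_
      have : (inner ℂ (f i) v : ℂ) = 0 := congrFun hv i
      rw [this, zero_smul]
    exact (LinearEquiv.map_eq_zero_iff S).mp hSv
  have hle : LinearMap.range T ≤ LinearMap.ker φ := by
    rintro _ ⟨v, rfl⟩
    show ∑ i, (inner ℂ (f i) v : ℂ) = 0
    rw [← sum_inner, hsumf, inner_zero_left]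
  have hφsurj : LinearMap.range φ = ⊤ := by
    rw [LinearMap.range_eq_top]
    intro z
    refine ⟨fun _ => z / N, ?_⟩
    show ∑ _i : Fin N, z / N = z
    rw [Finset.sum_const, Finset.card_univ, Fintype.card_fin, nsmul_eq_mul]
    have hNne : (N : ℂ) ≠ 0 := Nat.cast_ne_zero.mpr hN.ne'
    field_simp
  have hdim : Module.finrank ℂ (LinearMap.range T) =
      Module.finrank ℂ (LinearMap.ker φ) := by
    have h1 : Module.finrank ℂ (LinearMap.range T) = N - 1 := by
      rw [LinearMap.finrank_range_of_inj (LinearMap.ker_eq_bot.mp hTker)]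
      simp [finrank_euclideanSpace]
    have h2 : Module.finrank ℂ (LinearMap.ker φ) = N - 1 := by
      have := LinearMap.finrank_range_add_finrank_ker φ
      rw [hφsurj, finrank_top] at this
      simp only [Module.finrank_fintype_fun_eq_card, Fintype.card_fin,
        Module.finrank_self] at this
      omega
    rw [h1, h2]
  have hrange : LinearMap.range T = LinearMap.ker φ :=
    Submodule.eq_of_le_of_finrank_eq hle hdim
  -- key identity
  set d : Fin N → EuclideanSpace ℂ (Fin (N - 1)) := fun i => g i - S.symm (f i) with hd
  have hkey : ∀ v : EuclideanSpace ℂ (Fin (N - 1)),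
      ∑ i, (inner ℂ (f i) v : ℂ) • d i = 0 := by
    intro v
    have h1 : ∑ i, (inner ℂ (f i) v : ℂ) • g i = v := (hdual v).symm
    have h2 : ∑ i, (inner ℂ (f i) v : ℂ) • S.symm (f i) = v := by
      have := congrArg S.symm (hS v)
      rw [LinearEquiv.symm_apply_apply, map_sum] at this
      simp only [map_smul] at this
      exact this.symm
    simp only [hd, smul_sub, Finset.sum_sub_distrib, h1, h2, sub_self]
  -- conclude d is constant
  refine ⟨d i0, fun k => ?_⟩
  have ha : (fun i => (if i = k then (1:ℂ) else 0) - (if i = i0 then 1 else 0)) ∈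
      LinearMap.ker φ := by
    show (∑ i, ((if i = k then (1:ℂ) else 0) - (if i = i0 then 1 else 0))) = 0
    simp [Finset.sum_sub_distrib]
  rw [← hrange] at ha
  obtain ⟨v, hv⟩ := ha
  have h0 := hkey v
  have hvi : ∀ i, (inner ℂ (f i) v : ℂ) =
      (if i = k then (1:ℂ) else 0) - (if i = i0 then 1 else 0) := fun i =>
    congrFun hv i
  rw [Finset.sum_congr rfl (fun i _ => by rw [hvi i])] at h0
  simp only [sub_smul, ite_smul, one_smul, zero_smul, Finset.sum_sub_distrib,
    Finset.sum_ite_eq', Finset.mem_univ, if_true] at h0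
  have hdk : d k = d i0 := by
    have := sub_eq_zero.mp h0
    exact this
  rw [hratio k, one_smul, ← hdk]
  simp only [hd]
  abel
end
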